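/- Let A be an assortment and let u_A(w) = max_{S ⊆ A} (v(S)·w − Σ_{i∈S} p_i) be the indirect utility of a type-w buyer. If assortment B satisfies u_B(w) ≤ u_A(w) for all w ∈ [0,H] and u_B(H) = u_A(H), and the revenue curve R is twice differentiable with R'' ≤ 0 on [0,H], then Rev(B) ≥ Rev(A), where Rev(·) is given by the integral representation Rev(T) = ∫_0^H u_T(w) R''(w) dw − R'(H) u_T(H). -/

import Mathlib

open MeasureTheory

/-- Monotonicity principle for concave revenue curves: if `u_B ≤ u_A`
pointwise on `[0, H]` with equality at `H`, and `R'' ≤ 0` on `[0, H]`, then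
`Rev B ≥ Rev A` for the integral representation
`Rev T = ∫_0^H u_T(w) R''(w) dw − R'(H) u_T(H)`. -/
theorem stmt9 {ι : Type*} [DecidableEq ι] [Fintype ι]
    (v : Finset ι → ℝ) (p : ι → ℝ)
    (H : ℝ) (hH : 0 ≤ H)
    (u : Finset ι → ℝ → ℝ)
    (hu : ∀ (T : Finset ι) (w : ℝ),
      u T w = T.powerset.sup' (Finset.powerset_nonempty T)
        (fun S => v S * w - ∑ i ∈ S, p i))
    (A B : Finset ι)
    (hle : ∀ w ∈ Set.Icc (0 : ℝ) H, u B w ≤ u A w)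
    (htop : u B H = u A H)
    (R R' R'' : ℝ → ℝ)
    (hR' : ∀ x ∈ Set.Icc (0 : ℝ) H, HasDerivAt R (R' x) x)
    (hR'' : ∀ x ∈ Set.Icc (0 : ℝ) H, HasDerivAt R' (R'' x) x)
    (hconc : ∀ x ∈ Set.Icc (0 : ℝ) H, R'' x ≤ 0)
    (hInt : ∀ T : Finset ι,
      IntervalIntegrable (fun w => u T w * R'' w) volume 0 H)
    (Rev : Finset ι → ℝ)
    (hRev : ∀ T : Finset ι,
      Rev T = (∫ w in (0 : ℝ)..H, u T w * R'' w) - R' H * u T H) :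
    Rev A ≤ Rev B := by
  rw [hRev A, hRev B, htop]
  have : (∫ w in (0:ℝ)..H, u A w * R'' w) ≤ ∫ w in (0:ℝ)..H, u B w * R'' w := by
    apply intervalIntegral.integral_mono_on hH (hInt A) (hInt B)
    intro x hx
    have h1 := hle x hx
    have h2 := hconc x hx
    nlinarith
  linarith
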